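/- Let n ≥ 1, let s : ℝ → ℝ be continuous with s(0) = 0 and s(a) > 0 for all a ≠ 0, and let m : ℝ^n → ℝ^n be continuous with m_i(x) > 0 for all x ∈ ℝ^n and all i < n. Define w : ℝ^n → ℝ^n by w_i(x) = s(y_i − y_{i+1}) · m_i(x) for i < n and w_n(x) = m_n(x), where y is the sorted version of x, and define f : ℝ^n → ℝ^n by f(x)_{σ(i)} = Σ_{j=i}^{n} w_j(x) for any permutation σ sorting x (this is well defined). Then f is continuous and intra order-preserving. -/

import Mathlib

/-- `f` is intra order-preserving: `x` and `f x` share the same ranking. -/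
def IntraOrderPreserving (n : ℕ) (f : (Fin n → ℝ) → (Fin n → ℝ)) : Prop :=
  ∀ (x : Fin n → ℝ) (i j : Fin n), x i > x j ↔ f x i > f x j

/-- `σ` is a permutation sorting `x` in nonincreasing order. -/
def SortsPerm (n : ℕ) (σ : Equiv.Perm (Fin n)) (x : Fin n → ℝ) : Prop :=
  Antitone (x ∘ σ)

/-- The sorted (nonincreasing) version of `x`. -/
noncomputable def sortedDesc (n : ℕ) (x : Fin n → ℝ) : Fin n → ℝ :=
  fun i => x (Tuple.sort (fun j => -x j) i)

/-- `w_i(x) = s(y_i - y_{i+1}) * m_i(x)` for `i < n` and `w_n(x) = m_n(x)`,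
where `y` is the sorted version of `x`. -/
noncomputable def wFun (n : ℕ) (s : ℝ → ℝ) (m : (Fin n → ℝ) → (Fin n → ℝ)) :
    (Fin n → ℝ) → Fin n → ℝ :=
  fun x i =>
    if h : (i : ℕ) + 1 < n then
      s (sortedDesc n x i - sortedDesc n x ⟨(i : ℕ) + 1, h⟩) * m x i
    else m x i

lemma natChainEq (y : ℕ → ℝ) (a : ℕ) : ∀ b : ℕ, a ≤ b →
    (∀ j, a ≤ j → j < b → y j = y (j+1)) → y a = y b := by
  intro b
  induction b with
  | zero => intro h _; have : a = 0 := by omega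
            rw [this]
  | succ b ih =>
    intro hab h
    rcases Nat.lt_or_ge a (b+1) with hl | hg
    · have hab' : a ≤ b := by omega
      have := ih hab' (fun j hj hj' => h j hj (by omega))
      rw [this, h b hab' (by omega)]
    · have : a = b+1 := by omega
      rw [this]

noncomputable def kthMax (n : ℕ) (k : Fin n) (x : Fin n → ℝ) : ℝ :=
  (Finset.univ.powersetCard ((k : ℕ)+1)).sup'
    (Finset.powersetCard_nonempty.2 (by rw [Finset.card_fin]; exact k.isLt))
    (fun S => if h : S.Nonempty then S.inf' h x else 0)

lemma kthMax_continuous (n : ℕ) (k : Fin n) : Continuous (kthMax n k) := by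
  apply Continuous.finset_sup'_apply
  intro S hS
  rcases em S.Nonempty with h | h
  · simp only [dif_pos h]
    exact Continuous.finset_inf'_apply h (fun i _ => continuous_apply i)
  · simp only [dif_neg h]; exact continuous_const

lemma kthMax_eq (n : ℕ) (k : Fin n) (x : Fin n → ℝ) (σ : Equiv.Perm (Fin n))
    (hσ : Antitone (x ∘ σ)) : kthMax n k x = x (σ k) := by
  apply le_antisymm
  · apply Finset.sup'_le
    intro S hS
    rw [Finset.mem_powersetCard] at hS
    have hScard : S.card = (k : ℕ) + 1 := hS.2
    have hne : S.Nonempty := Finset.card_pos.1 (by omega)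
    rw [dif_pos hne]
    have : ∃ j ∈ S, k ≤ σ.symm j := by
      by_contra hcon
      push_neg at hcon
      have hsub : S.image σ.symm ⊆ Finset.Iio k := by
        intro j hj
        rw [Finset.mem_image] at hj
        obtain ⟨a, ha, rfl⟩ := hj
        exact Finset.mem_Iio.2 (hcon a ha)
      have hc1 : (S.image σ.symm).card = (k : ℕ) + 1 := by
        rw [Finset.card_image_of_injective _ σ.symm.injective, hScard]
      have hc2 := Finset.card_le_card hsub
      rw [hc1, Fin.card_Iio] at hc2
      omega
    obtain ⟨j, hjS, hjk⟩ := this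
    calc S.inf' hne x ≤ x j := Finset.inf'_le _ hjS
      _ = x (σ (σ.symm j)) := by rw [Equiv.apply_symm_apply]
      _ ≤ x (σ k) := hσ hjk
  · have hmem : (Finset.Iic k).image σ ∈ Finset.univ.powersetCard ((k : ℕ)+1) := by
      rw [Finset.mem_powersetCard]
      refine ⟨Finset.subset_univ _, ?_⟩
      rw [Finset.card_image_of_injective _ σ.injective, Fin.card_Iic]
    refine le_trans ?_ (Finset.le_sup' _ hmem)
    have hne : ((Finset.Iic k).image σ).Nonempty :=
      ⟨σ k, Finset.mem_image_of_mem _ (Finset.mem_Iic.2 le_rfl)⟩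
    rw [dif_pos hne]
    apply Finset.le_inf'
    intro b hb
    rw [Finset.mem_image] at hb
    obtain ⟨j, hj, rfl⟩ := hb
    exact hσ (Finset.mem_Iic.1 hj)

lemma sortedDesc_antitone (n : ℕ) (x : Fin n → ℝ) : Antitone (sortedDesc n x) := by
  intro i j hij
  have h := Tuple.monotone_sort (fun j => -x j) hij
  simp only [Function.comp_apply] at h
  simpa [sortedDesc] using h

lemma sortsPerm_sort (n : ℕ) (x : Fin n → ℝ) :
    SortsPerm n (Tuple.sort (fun j => -x j)) x :=
  fun _ _ h => sortedDesc_antitone n x h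

lemma sortedDesc_continuous (n : ℕ) (k : Fin n) :
    Continuous (fun x : Fin n → ℝ => sortedDesc n x k) := by
  have h : (fun x : Fin n → ℝ => sortedDesc n x k) = kthMax n k := by
    funext x
    rw [kthMax_eq n k x _ (sortsPerm_sort n x)]
    rfl
  rw [h]; exact kthMax_continuous n k

theorem stmt_13 (n : ℕ) (hn : 1 ≤ n) (s : ℝ → ℝ)
    (hs : Continuous s) (hs0 : s 0 = 0) (hspos : ∀ a : ℝ, a ≠ 0 → 0 < s a)
    (m : (Fin n → ℝ) → (Fin n → ℝ)) (hm : Continuous m)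
    (hmpos : ∀ (x : Fin n → ℝ) (i : Fin n), (i : ℕ) + 1 < n → 0 < m x i)
    (f : (Fin n → ℝ) → (Fin n → ℝ))
    (hfdef : ∀ (x : Fin n → ℝ) (σ : Equiv.Perm (Fin n)), SortsPerm n σ x →
      ∀ i : Fin n, f x (σ i) = ∑ j ∈ Finset.Ici i, wFun n s m x j) :
    Continuous f ∧ IntraOrderPreserving n f := by
  classical
  have hyanti : ∀ x : Fin n → ℝ, Antitone (sortedDesc n x) := sortedDesc_antitone n
  have hsnonneg : ∀ a : ℝ, 0 ≤ a → 0 ≤ s a := by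
    intro a ha
    rcases eq_or_lt_of_le ha with h | h
    · rw [← h, hs0]
    · exact le_of_lt (hspos a (ne_of_gt h))
  -- basic facts about w
  have hle_succ : ∀ (j : Fin n) (h : (j:ℕ)+1 < n), j ≤ (⟨(j:ℕ)+1, h⟩ : Fin n) := by
    intro j h; exact Fin.le_def.2 (Nat.le_succ _)
  have hwnn : ∀ (x : Fin n → ℝ) (j : Fin n), (j:ℕ)+1 < n → 0 ≤ wFun n s m x j := by
    intro x j hj
    simp only [wFun, dif_pos hj]
    apply mul_nonneg
    · exact hsnonneg _ (sub_nonneg.2 (hyanti x (hle_succ j hj)))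
    · exact le_of_lt (hmpos x j hj)
  have hwzero : ∀ (x : Fin n → ℝ) (j : Fin n) (hj : (j:ℕ)+1 < n),
      sortedDesc n x j = sortedDesc n x ⟨(j:ℕ)+1, hj⟩ → wFun n s m x j = 0 := by
    intro x j hj he
    simp only [wFun, dif_pos hj, he, sub_self, hs0, zero_mul]
  -- from w x j = 0 deduce equality of consecutive sorted values
  have hweq : ∀ (x : Fin n → ℝ) (j : Fin n) (hj : (j:ℕ)+1 < n),
      wFun n s m x j = 0 → sortedDesc n x j = sortedDesc n x ⟨(j:ℕ)+1, hj⟩ := by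
    intro x j hj h0
    simp only [wFun, dif_pos hj] at h0
    have hm' := hmpos x j hj
    have hsd : s (sortedDesc n x j - sortedDesc n x ⟨(j:ℕ)+1, hj⟩) = 0 := by
      rcases mul_eq_zero.1 h0 with h | h
      · exact h
      · exact absurd h (ne_of_gt hm')
    by_contra hne
    exact absurd hsd (ne_of_gt (hspos _ (sub_ne_zero.2 hne)))
  -- the key comparison lemma
  have key : ∀ (x : Fin n → ℝ) (i k : Fin n), i ≤ k →
      ((∑ j ∈ Finset.Ici k, wFun n s m x j) ≤ (∑ j ∈ Finset.Ici i, wFun n s m x j) ∧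
       (sortedDesc n x k < sortedDesc n x i ↔
        (∑ j ∈ Finset.Ici k, wFun n s m x j) < (∑ j ∈ Finset.Ici i, wFun n s m x j))) := by
    intro x i k hik
    have hsplitset : Finset.Ico i k ∪ Finset.Ici k = Finset.Ici i := by
      ext a
      simp only [Finset.mem_union, Finset.mem_Ico, Finset.mem_Ici]
      constructor
      · rintro (⟨h1, _⟩ | h1)
        · exact h1
        · exact le_trans hik h1
      · intro h1
        rcases lt_or_ge a k with h2 | h2
        · exact Or.inl ⟨h1, h2⟩
        · exact Or.inr h2
    have hdisj : Disjoint (Finset.Ico i k) (Finset.Ici k) := by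
      rw [Finset.disjoint_left]
      intro a ha hb
      rw [Finset.mem_Ico] at ha
      rw [Finset.mem_Ici] at hb
      exact absurd ha.2 (not_lt.2 hb)
    have hsum : (∑ j ∈ Finset.Ici i, wFun n s m x j)
        = (∑ j ∈ Finset.Ico i k, wFun n s m x j) + (∑ j ∈ Finset.Ici k, wFun n s m x j) := by
      rw [← Finset.sum_union hdisj, hsplitset]
    have hlt1 : ∀ j ∈ Finset.Ico i k, (j:ℕ)+1 < n := by
      intro j hj
      rw [Finset.mem_Ico] at hj
      have h1 : (j:ℕ) < (k:ℕ) := hj.2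
      have h2 := k.isLt
      omega
    have hnn : ∀ j ∈ Finset.Ico i k, 0 ≤ wFun n s m x j :=
      fun j hj => hwnn x j (hlt1 j hj)
    have hIconn : 0 ≤ ∑ j ∈ Finset.Ico i k, wFun n s m x j := Finset.sum_nonneg hnn
    refine ⟨by linarith, ?_, ?_⟩
    · -- y k < y i → sums strictly ordered
      intro hy
      by_contra hng
      have heq : (∑ j ∈ Finset.Ici i, wFun n s m x j)
          = (∑ j ∈ Finset.Ici k, wFun n s m x j) := le_antisymm (not_lt.1 hng) (by linarith)
      have hIco0 : (∑ j ∈ Finset.Ico i k, wFun n s m x j) = 0 := by linarith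
      have hzero : ∀ j ∈ Finset.Ico i k, wFun n s m x j = 0 :=
        (Finset.sum_eq_zero_iff_of_nonneg hnn).1 hIco0
      set Y : ℕ → ℝ := fun t => if h : t < n then sortedDesc n x ⟨t, h⟩ else 0 with hY
      have hchain : Y (i:ℕ) = Y (k:ℕ) := by
        apply natChainEq Y (i:ℕ) (k:ℕ) hik
        intro t ht1 ht2
        have htn : t < n := lt_trans ht2 k.isLt
        have ht1n : t + 1 < n := by have := k.isLt; omega
        have hmem : (⟨t, htn⟩ : Fin n) ∈ Finset.Ico i k :=
          Finset.mem_Ico.2 ⟨Fin.le_def.2 ht1, Fin.lt_def.2 ht2⟩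
        have := hweq x ⟨t, htn⟩ ht1n (hzero _ hmem)
        simp only [hY, dif_pos htn, dif_pos ht1n]
        exact this
      rw [hY] at hchain
      simp only [dif_pos i.isLt, dif_pos k.isLt, Fin.eta] at hchain
      rw [hchain] at hy
      exact lt_irrefl _ hy
    · intro hg
      by_contra hny
      have hyik : sortedDesc n x i = sortedDesc n x k :=
        le_antisymm (not_lt.1 hny) (hyanti x hik)
      have hz : ∀ j ∈ Finset.Ico i k, wFun n s m x j = 0 := by
        intro j hj
        have hjn := hlt1 j hj
        rw [Finset.mem_Ico] at hj
        have h1 : sortedDesc n x j ≤ sortedDesc n x i := hyanti x hj.1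
        have h2 : sortedDesc n x k ≤ sortedDesc n x ⟨(j:ℕ)+1, hjn⟩ := by
          apply hyanti x
          exact Fin.le_def.2 (Nat.succ_le_of_lt hj.2)
        have h3 : sortedDesc n x ⟨(j:ℕ)+1, hjn⟩ ≤ sortedDesc n x j :=
          hyanti x (hle_succ j hjn)
        apply hwzero x j hjn
        rw [hyik] at h1
        linarith
      have hIco0 : (∑ j ∈ Finset.Ico i k, wFun n s m x j) = 0 := Finset.sum_eq_zero hz
      rw [hsum, hIco0, zero_add] at hg
      exact lt_irrefl _ hg
  -- value of f in terms of the sorting permutation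
  have hfa : ∀ (x : Fin n → ℝ) (a : Fin n),
      f x a = ∑ j ∈ Finset.Ici ((Tuple.sort (fun j => -x j)).symm a), wFun n s m x j := by
    intro x a
    have h := hfdef x (Tuple.sort (fun j => -x j)) (sortsPerm_sort n x)
      ((Tuple.sort (fun j => -x j)).symm a)
    rwa [Equiv.apply_symm_apply] at h
  have hxa : ∀ (x : Fin n → ℝ) (a : Fin n),
      x a = sortedDesc n x ((Tuple.sort (fun j => -x j)).symm a) := by
    intro x a
    show x a = x (Tuple.sort (fun j => -x j) ((Tuple.sort (fun j => -x j)).symm a))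
    rw [Equiv.apply_symm_apply]
  constructor
  · -- Continuity
    apply continuous_pi
    intro a
    have hfeq : (fun x : Fin n → ℝ => f x a) = (fun x : Fin n → ℝ => ∑ j : Fin n,
        (if h : (j:ℕ)+1 < n then
          s (min (sortedDesc n x j) (x a) - min (sortedDesc n x ⟨(j:ℕ)+1, h⟩) (x a)) * m x j
        else m x j)) := by
      funext x
      set i := (Tuple.sort (fun j => -x j)).symm a with hi
      have hxa' := hxa x a
      have hterm : ∀ j : Fin n,
          (if h : (j:ℕ)+1 < n then
            s (min (sortedDesc n x j) (x a) - min (sortedDesc n x ⟨(j:ℕ)+1, h⟩) (x a)) * m x j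
          else m x j) = if i ≤ j then wFun n s m x j else 0 := by
        intro j
        by_cases hij : i ≤ j
        · rw [if_pos hij]
          by_cases h : (j:ℕ)+1 < n
          · rw [dif_pos h]
            simp only [wFun, dif_pos h]
            have h1 : sortedDesc n x j ≤ x a := by
              rw [hxa']; exact hyanti x hij
            have h2 : sortedDesc n x ⟨(j:ℕ)+1, h⟩ ≤ x a := by
              rw [hxa']; exact hyanti x (le_trans hij (hle_succ j h))
            rw [min_eq_left h1, min_eq_left h2]
          · rw [dif_neg h]
            simp only [wFun, dif_neg h]
        · rw [if_neg hij]
          have hji : j < i := lt_of_not_ge hij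
          have h : (j:ℕ)+1 < n := by
            have h1 : (j:ℕ) < (i:ℕ) := hji
            have h2 := i.isLt
            omega
          rw [dif_pos h]
          have h1 : x a ≤ sortedDesc n x j := by
            rw [hxa']; exact hyanti x hji.le
          have h2 : x a ≤ sortedDesc n x ⟨(j:ℕ)+1, h⟩ := by
            rw [hxa']
            exact hyanti x (Fin.le_def.2 (Nat.succ_le_of_lt hji))
          rw [min_eq_right h1, min_eq_right h2, sub_self, hs0, zero_mul]
      rw [hfa x a, ← hi]
      rw [Finset.sum_congr rfl (fun j _ => hterm j), ← Finset.sum_filter]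
      apply Finset.sum_congr
      · ext j
        simp [Finset.mem_Ici]
      · intro j _; rfl
    rw [hfeq]
    apply continuous_finset_sum
    intro j _
    by_cases h : (j:ℕ)+1 < n
    · simp only [dif_pos h]
      exact (hs.comp (((sortedDesc_continuous n j).min (continuous_apply a)).sub
        ((sortedDesc_continuous n ⟨(j:ℕ)+1, h⟩).min (continuous_apply a)))).mul
        ((continuous_apply j).comp hm)
    · simp only [dif_neg h]
      exact (continuous_apply j).comp hm
  · -- IntraOrderPreserving
    intro x a b
    set i := (Tuple.sort (fun j => -x j)).symm a with hi
    set k := (Tuple.sort (fun j => -x j)).symm b with hk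
    have hxa' := hxa x a
    have hxb' := hxa x b
    have hfa' := hfa x a
    have hfb' := hfa x b
    rcases lt_trichotomy i k with h | h | h
    · rw [hxa', hxb', hfa', hfb', ← hi, ← hk]
      exact (key x i k h.le).2
    · have hab : a = b := by
        have := congrArg (Tuple.sort (fun j => -x j)) (hi.symm.trans (h.trans hk))
        rwa [Equiv.apply_symm_apply, Equiv.apply_symm_apply] at this
      subst hab
      exact ⟨fun h' => absurd h' (lt_irrefl _), fun h' => absurd h' (lt_irrefl _)⟩
    · have h1 := (key x k i h.le).1
      have h2 : sortedDesc n x i ≤ sortedDesc n x k := hyanti x h.le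
      constructor
      · intro hlt
        rw [hxa', hxb', ← hi, ← hk] at hlt
        exact absurd hlt (not_lt.2 h2)
      · intro hlt
        rw [hfa', hfb', ← hi, ← hk] at hlt
        exact absurd hlt (not_lt.2 h1)
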